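/- arXiv:math/0004092 — 5 statements merged into one kernel-verified Lean document; each statement's English description precedes it below -/
import Mathlib

section
/- In the algebra A(SL_q(2)) (the free algebra on a,b,c,d modulo the relations ab=qba, ac=qca, bd=qdb, bc=cb, cd=qdc, ad-da=(q-q^{-1})bc, ad-qbc=1), for every k ≥ 0 one has a^k d^k = ∏_{j=1}^{k} (1 + q^{2j-1} b c). -/
noncomputable section
open scoped TensorProduct

/-- The free `ℂ`-algebra on four generators `a, b, c, d`. -/
abbrev FreeSL : Type := FreeAlgebra ℂ (Fin 4)

def Fa : FreeSL := FreeAlgebra.ι ℂ 0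
def Fb : FreeSL := FreeAlgebra.ι ℂ 1
def Fc : FreeSL := FreeAlgebra.ι ℂ 2
def Fd : FreeSL := FreeAlgebra.ι ℂ 3

/-- The defining relations of `A(SL_q(2))`. -/
inductive SLqRel (q : ℂ) : FreeSL → FreeSL → Prop
  | ab : SLqRel q (Fa * Fb) (q • (Fb * Fa))
  | ac : SLqRel q (Fa * Fc) (q • (Fc * Fa))
  | bd : SLqRel q (Fb * Fd) (q • (Fd * Fb))
  | bc : SLqRel q (Fb * Fc) (Fc * Fb)
  | cd : SLqRel q (Fc * Fd) (q • (Fd * Fc))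
  | ad : SLqRel q (Fa * Fd - Fd * Fa) ((q - q⁻¹) • (Fb * Fc))
  | det : SLqRel q (Fa * Fd - q • (Fb * Fc)) 1

/-- The quantum coordinate algebra `A(SL_q(2))`. -/
abbrev ASLq (q : ℂ) : Type := RingQuot (SLqRel q)

def aq (q : ℂ) : ASLq q := RingQuot.mkAlgHom ℂ (SLqRel q) Fa
def bq (q : ℂ) : ASLq q := RingQuot.mkAlgHom ℂ (SLqRel q) Fb
def cq (q : ℂ) : ASLq q := RingQuot.mkAlgHom ℂ (SLqRel q) Fc
def dq (q : ℂ) : ASLq q := RingQuot.mkAlgHom ℂ (SLqRel q) Fd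

/-- The coefficients `p_{k,j}(q)`. -/
def pcoef (q : ℂ) (k j : ℕ) : ℂ :=
  q ^ (j ^ 2) * (∏ r ∈ Finset.Icc (j + 1) k, (q ^ (2 * r) - 1)) /
    (∏ s ∈ Finset.Icc 1 (k - j), (q ^ (2 * s) - 1))

lemma had (q : ℂ) : aq q * dq q = 1 + q • (bq q * cq q) := by
  have h := RingQuot.mkAlgHom_rel ℂ (SLqRel.det (q := q))
  simp only [map_sub, map_mul, map_smul, map_one] at h
  rwa [sub_eq_iff_eq_add] at h

lemma hbd (q : ℂ) : bq q * dq q = q • (dq q * bq q) := by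
  have h := RingQuot.mkAlgHom_rel ℂ (SLqRel.bd (q := q))
  simp only [map_mul, map_smul] at h
  exact h

lemma hcd (q : ℂ) : cq q * dq q = q • (dq q * cq q) := by
  have h := RingQuot.mkAlgHom_rel ℂ (SLqRel.cd (q := q))
  simp only [map_mul, map_smul] at h
  exact h

lemma hbcd (q : ℂ) : (bq q * cq q) * dq q = (q ^ 2) • (dq q * (bq q * cq q)) := by
  calc (bq q * cq q) * dq q = bq q * (cq q * dq q) := by rw [mul_assoc]
    _ = q • (bq q * (dq q * cq q)) := by rw [hcd]; rw [mul_smul_comm]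
    _ = q • ((bq q * dq q) * cq q) := by rw [mul_assoc]
    _ = q • ((q • (dq q * bq q)) * cq q) := by rw [hbd]
    _ = (q ^ 2) • (dq q * (bq q * cq q)) := by
        rw [smul_mul_assoc, smul_smul, sq, mul_assoc]

lemma hbcdk (q : ℂ) (k : ℕ) :
    (bq q * cq q) * dq q ^ k = (q ^ (2 * k)) • (dq q ^ k * (bq q * cq q)) := by
  induction k with
  | zero => simp
  | succ n ih =>
    conv_lhs => rw [pow_succ', ← mul_assoc]
    calc (bq q * cq q) * dq q * dq q ^ n
        = ((q ^ 2) • (dq q * (bq q * cq q))) * dq q ^ n := by rw [hbcd]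
      _ = (q ^ 2) • (dq q * ((bq q * cq q) * dq q ^ n)) := by
          rw [smul_mul_assoc, mul_assoc]
      _ = (q ^ 2) • (dq q * ((q ^ (2 * n)) • (dq q ^ n * (bq q * cq q)))) := by rw [ih]
      _ = (q ^ (2 * (n + 1))) • (dq q ^ (n + 1) * (bq q * cq q)) := by
          have he : (2:ℕ) + 2 * n = 2 * (n + 1) := by omega
          rw [mul_smul_comm, smul_smul, ← pow_add, he, pow_succ', mul_assoc]

/-- In `A(SL_q(2))`, for every `k ≥ 0`,
`a^k d^k = ∏_{j=1}^{k} (1 + q^(2j-1) b c)`. -/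
theorem stmt0 (q : ℂ) (hq : q ≠ 0) (k : ℕ) :
    aq q ^ k * dq q ^ k =
      ((List.range k).map (fun j => 1 + q ^ (2 * (j + 1) - 1) • (bq q * cq q))).prod := by
  induction k with
  | zero => simp
  | succ n ih =>
    rw [List.range_succ, List.map_append, List.prod_append, ← ih]
    simp only [List.map_cons, List.map_nil, List.prod_cons, List.prod_nil, mul_one]
    have h1 : aq q ^ (n + 1) * dq q ^ (n + 1)
        = aq q ^ n * ((aq q * dq q) * dq q ^ n) := by
      rw [pow_succ, pow_succ', mul_assoc, mul_assoc]
    rw [h1, had]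
    have h2 : (1 + q • (bq q * cq q)) * dq q ^ n
        = dq q ^ n + q • ((bq q * cq q) * dq q ^ n) := by
      rw [add_mul, one_mul, smul_mul_assoc]
    rw [h2, hbcdk, smul_smul]
    have h3 : 2 * (n + 1) - 1 = 2 * n + 1 := by omega
    have hexp : q * q ^ (2 * n) = q ^ (2 * (n + 1) - 1) := by
      rw [h3]; exact (pow_succ' q (2 * n)).symm
    rw [hexp]
    conv_rhs => rw [mul_add, mul_one, mul_smul_comm]
    rw [mul_add, mul_smul_comm, ← mul_assoc]
end
end

section
/- In A(SL_q(2)) with q a nonzero complex number such that q^{2s} ≠ 1 for 1 ≤ s ≤ k, one has a^k d^k = Σ_{j=0}^{k} p_{k,j}(q) b^j c^j, where p_{k,j}(q) = q^{j^2} · (∏_{r=j+1}^{k}(q^{2r}-1)) / (∏_{s=1}^{k-j}(q^{2s}-1)). -/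
noncomputable section
open scoped TensorProduct

variable (q : ℂ)

lemma rel_ab : aq q * bq q = q • (bq q * aq q) := by
  have h := RingQuot.mkAlgHom_rel ℂ (SLqRel.ab (q := q))
  simpa [aq, bq, map_mul] using h

lemma rel_cd : cq q * dq q = q • (dq q * cq q) := by
  have h := RingQuot.mkAlgHom_rel ℂ (SLqRel.cd (q := q))
  simpa [cq, dq, map_mul] using h

lemma rel_ad : aq q * dq q = 1 + q • (bq q * cq q) := by
  have h := RingQuot.mkAlgHom_rel ℂ (SLqRel.det (q := q))
  simp only [map_sub, map_mul, map_smul, map_one] at h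
  have h' : aq q * dq q - q • (bq q * cq q) = 1 := h
  rw [sub_eq_iff_eq_add] at h'
  rw [h', add_comm]

lemma apow_b (k : ℕ) : aq q ^ k * bq q = (q ^ k) • (bq q * aq q ^ k) := by
  induction k with
  | zero => simp
  | succ n ih =>
    calc aq q ^ (n+1) * bq q = aq q ^ n * (aq q * bq q) := by
          rw [pow_succ, mul_assoc]
      _ = q • (aq q ^ n * bq q * aq q) := by
          rw [rel_ab, mul_smul_comm, mul_assoc]
      _ = q • ((q ^ n) • (bq q * aq q ^ n) * aq q) := by rw [ih]
      _ = (q ^ (n+1)) • (bq q * aq q ^ (n+1)) := by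
          rw [smul_mul_assoc, smul_smul, mul_assoc, ← pow_succ, ← pow_succ']

lemma c_dpow (k : ℕ) : cq q * dq q ^ k = (q ^ k) • (dq q ^ k * cq q) := by
  induction k with
  | zero => simp
  | succ n ih =>
    calc cq q * dq q ^ (n+1) = (cq q * dq q) * dq q ^ n := by
          rw [pow_succ', ← mul_assoc]
      _ = q • (dq q * (cq q * dq q ^ n)) := by
          rw [rel_cd, smul_mul_assoc, mul_assoc]
      _ = q • (dq q * ((q ^ n) • (dq q ^ n * cq q))) := by rw [ih]
      _ = (q ^ (n+1)) • (dq q ^ (n+1) * cq q) := by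
          rw [mul_smul_comm, smul_smul, ← mul_assoc, ← pow_succ', ← pow_succ']

lemma step (k : ℕ) :
    aq q ^ (k+1) * dq q ^ (k+1) =
      aq q ^ k * dq q ^ k
        + (q ^ (2*k+1)) • (bq q * (aq q ^ k * dq q ^ k) * cq q) := by
  have h1 : aq q ^ (k+1) * dq q ^ (k+1) = aq q ^ k * (aq q * dq q) * dq q ^ k := by
    rw [pow_succ, pow_succ']; rw [mul_assoc, mul_assoc, mul_assoc]
  rw [h1, rel_ad, mul_add, mul_one, add_mul, mul_smul_comm, smul_mul_assoc]
  congr 1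
  have h2 : aq q ^ k * (bq q * cq q) * dq q ^ k
      = (aq q ^ k * bq q) * (cq q * dq q ^ k) := by
    noncomm_ring
  rw [h2, apow_b, c_dpow, smul_mul_assoc, mul_smul_comm, smul_smul, smul_smul]
  congr 1
  · ring
  · noncomm_ring

lemma prodD_ne (k : ℕ) (hroot : ∀ s : ℕ, 1 ≤ s → s ≤ k → q ^ (2 * s) ≠ 1)
    (n : ℕ) (hn : n ≤ k) : (∏ s ∈ Finset.Icc 1 n, (q ^ (2 * s) - 1)) ≠ 0 := by
  rw [Finset.prod_ne_zero_iff]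
  intro s hs
  rw [Finset.mem_Icc] at hs
  exact sub_ne_zero.mpr (hroot s hs.1 (hs.2.trans hn))

lemma pcoef_zero (k : ℕ) (hroot : ∀ s : ℕ, 1 ≤ s → s ≤ k → q ^ (2 * s) ≠ 1) :
    pcoef q k 0 = 1 := by
  unfold pcoef
  norm_num
  exact prodD_ne q k hroot k le_rfl

lemma pcoef_top (k : ℕ) : pcoef q (k+1) (k+1) = q ^ (2*k+1) * pcoef q k k := by
  unfold pcoef
  simp only [Nat.sub_self, Finset.Icc_eq_empty (by omega : ¬ (k+1+1) ≤ (k+1)),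
    Finset.Icc_eq_empty (by omega : ¬ (k+1) ≤ k), Finset.Icc_eq_empty (by omega : ¬ 1 ≤ 0),
    Finset.prod_empty, mul_one, div_one]
  rw [← pow_add]
  congr 1
  ring

lemma pcoef_rec (k j : ℕ) (hroot : ∀ s : ℕ, 1 ≤ s → s ≤ k → q ^ (2 * s) ≠ 1)
    (hj : 1 ≤ j) (hjk : j ≤ k) :
    pcoef q (k+1) j = pcoef q k j + q ^ (2*k+1) * pcoef q k (j-1) := by
  obtain ⟨m, rfl⟩ : ∃ m, j = m + 1 := ⟨j - 1, by omega⟩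
  obtain ⟨t, rfl⟩ : ∃ t, k = m + t + 1 := ⟨k - m - 1, by omega⟩
  unfold pcoef
  simp only [Nat.add_sub_cancel]
  have e1 : m + t + 1 + 1 - (m + 1) = t + 1 := by omega
  have e2 : m + t + 1 - (m + 1) = t := by omega
  have e3 : m + t + 1 - m = t + 1 := by omega
  rw [e1, e2, e3]
  -- split numerator products
  have hN1 : (∏ r ∈ Finset.Icc (m + 1 + 1) (m + t + 1 + 1), (q ^ (2 * r) - 1))
      = (∏ r ∈ Finset.Icc (m + 2) (m + t + 1), (q ^ (2 * r) - 1)) * (q ^ (2 * (m + t + 2)) - 1) := by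
    have := Finset.prod_Icc_succ_top (a := m + 2) (b := m + t + 1)
      (f := fun r => (q ^ (2 * r) - 1)) (by omega)
    simpa [show m + 1 + 1 = m + 2 from rfl, show m + t + 1 + 1 = m + t + 2 from rfl] using this
  have hN3 : (∏ r ∈ Finset.Icc (m + 1) (m + t + 1), (q ^ (2 * r) - 1))
      = (q ^ (2 * (m + 1)) - 1) * ∏ r ∈ Finset.Icc (m + 2) (m + t + 1), (q ^ (2 * r) - 1) := by
    rw [← Finset.Ioc_insert_left (by omega : m + 1 ≤ m + t + 1), Finset.prod_insert (by simp),
      ← Finset.Icc_add_one_left_eq_Ioc]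
    rfl
  have hD : (∏ s ∈ Finset.Icc 1 (t + 1), (q ^ (2 * s) - 1))
      = (∏ s ∈ Finset.Icc 1 t, (q ^ (2 * s) - 1)) * (q ^ (2 * (t + 1)) - 1) := by
    exact Finset.prod_Icc_succ_top (by omega) _
  rw [hN1, hN3, hD]
  set P := ∏ r ∈ Finset.Icc (m + 2) (m + t + 1), (q ^ (2 * r) - 1) with hP
  set D := ∏ s ∈ Finset.Icc 1 t, (q ^ (2 * s) - 1) with hD2
  have hDne : D ≠ 0 := prodD_ne q (m+t+1) hroot t (by omega)
  have hQne : (q ^ (2 * (t + 1)) - 1) ≠ 0 := sub_ne_zero.mpr (hroot (t+1) (by omega) (by omega))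
  field_simp
  ring

/-- `a^k d^k = Σ_{j=0}^{k} p_{k,j}(q) b^j c^j` when `q^(2s) ≠ 1` for `1 ≤ s ≤ k`. -/
theorem stmt1 (q : ℂ) (hq : q ≠ 0) (k : ℕ)
    (hroot : ∀ s : ℕ, 1 ≤ s → s ≤ k → q ^ (2 * s) ≠ 1) :
    aq q ^ k * dq q ^ k =
      ∑ j ∈ Finset.range (k + 1), pcoef q k j • (bq q ^ j * cq q ^ j) := by
  induction k with
  | zero => simp [pcoef]
  | succ k ih =>
    have hroot' : ∀ s : ℕ, 1 ≤ s → s ≤ k → q ^ (2 * s) ≠ 1 :=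
      fun s h1 h2 => hroot s h1 (h2.trans (Nat.le_succ k))
    have IH := ih hroot'
    rw [step, IH]
    have hbSc : bq q * (∑ j ∈ Finset.range (k+1), pcoef q k j • (bq q ^ j * cq q ^ j)) * cq q
        = ∑ j ∈ Finset.range (k+1), pcoef q k j • (bq q ^ (j+1) * cq q ^ (j+1)) := by
      rw [Finset.mul_sum, Finset.sum_mul]
      refine Finset.sum_congr rfl fun j _ => ?_
      rw [mul_smul_comm, smul_mul_assoc]
      congr 1
      rw [pow_succ' (bq q), pow_succ (cq q)]
      noncomm_ring
    rw [hbSc, Finset.smul_sum]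
    simp only [smul_smul]
    -- RHS: peel off j = 0
    rw [Finset.sum_range_succ' _ (k+1), Finset.sum_range_succ' _ k]
    simp only [pow_zero, one_mul, pcoef_zero q k hroot', pcoef_zero q (k+1) hroot]
    -- peel top term of the two remaining range (k+1) sums
    rw [Finset.sum_range_succ (fun j => (q ^ (2*k+1) * pcoef q k j) • (bq q ^ (j+1) * cq q ^ (j+1))),
      Finset.sum_range_succ (fun j => pcoef q (k+1) (j+1) • (bq q ^ (j+1) * cq q ^ (j+1)))]
    have hterm : ∀ j ∈ Finset.range k,
        pcoef q k (j+1) • (bq q ^ (j+1) * cq q ^ (j+1))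
          + (q ^ (2*k+1) * pcoef q k j) • (bq q ^ (j+1) * cq q ^ (j+1))
        = pcoef q (k+1) (j+1) • (bq q ^ (j+1) * cq q ^ (j+1)) := by
      intro j hj
      rw [Finset.mem_range] at hj
      rw [← add_smul, pcoef_rec q k (j+1) hroot' (by omega) (by omega)]
      simp
    have hsum : (∑ j ∈ Finset.range k, pcoef q k (j+1) • (bq q ^ (j+1) * cq q ^ (j+1)))
        + ∑ j ∈ Finset.range k, (q ^ (2*k+1) * pcoef q k j) • (bq q ^ (j+1) * cq q ^ (j+1))
        = ∑ j ∈ Finset.range k, pcoef q (k+1) (j+1) • (bq q ^ (j+1) * cq q ^ (j+1)) := by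
      rw [← Finset.sum_add_distrib]
      exact Finset.sum_congr rfl hterm
    rw [pcoef_top, ← hsum, mul_smul]
    abel
end
end

section
/- Let q be a primitive l-th root of unity with l odd. Then in A(SL_q(2)) the elements α = a^l, β = b^l, γ = c^l, δ = d^l pairwise commute. -/
noncomputable section
open scoped TensorProduct

section Aux

variable {A : Type} [Ring A] [Algebra ℂ A]

/-- If `x * y = q • (y * x)` then `x ^ n * y = q ^ n • (y * x ^ n)`. -/
lemma qpow_comm {q : ℂ} {x y : A} (h : x * y = q • (y * x)) (n : ℕ) :
    x ^ n * y = q ^ n • (y * x ^ n) := by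
  induction n with
  | zero => simp
  | succ n ih =>
    calc x ^ (n + 1) * y = x ^ n * (x * y) := by rw [pow_succ, mul_assoc]
      _ = x ^ n * (q • (y * x)) := by rw [h]
      _ = q • ((x ^ n * y) * x) := by rw [mul_smul_comm, mul_assoc]
      _ = q • ((q ^ n • (y * x ^ n)) * x) := by rw [ih]
      _ = q ^ (n + 1) • (y * x ^ (n + 1)) := by
          rw [smul_mul_assoc, smul_smul, mul_assoc, ← pow_succ, ← pow_succ']

lemma comm_of_qcomm {q : ℂ} {l : ℕ} (hql : q ^ l = 1) {x y : A}
    (h : x * y = q • (y * x)) : Commute (x ^ l) (y ^ l) := by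
  have hx : Commute (x ^ l) y := by
    show x ^ l * y = y * x ^ l
    rw [qpow_comm h, hql, one_smul]
  exact hx.pow_right l

lemma da_pow {μ w : ℂ} {a d t : A} (hda : d * a = a * d - μ • t)
    (hta : t * a = w • (a * t)) (k : ℕ) :
    d * a ^ (k + 1) =
      a ^ (k + 1) * d - ((∑ i ∈ Finset.range (k + 1), w ^ i) * μ) • (a ^ k * t) := by
  induction k with
  | zero => simpa using hda
  | succ k ih =>
    have step : d * a ^ (k + 2) = (d * a ^ (k + 1)) * a := by
      rw [pow_succ, ← mul_assoc]
    rw [step, ih, sub_mul, smul_mul_assoc, mul_assoc, mul_assoc, hda, hta]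
    rw [mul_sub, ← mul_assoc, ← pow_succ]
    rw [mul_smul_comm, mul_smul_comm, smul_smul, ← mul_assoc, ← pow_succ]
    rw [geom_sum_succ (x := w) (n := k + 1)]
    rw [sub_sub, ← add_smul]
    module

end Aux

/-- For `q` a primitive `l`-th root of unity, `l` odd, the elements
`a^l, b^l, c^l, d^l` pairwise commute in `A(SL_q(2))`. -/
theorem stmt3 (q : ℂ) (l : ℕ) (hq : IsPrimitiveRoot q l) (hl : Odd l) :
    ∀ x ∈ ({aq q, bq q, cq q, dq q} : Set (ASLq q)),
      ∀ y ∈ ({aq q, bq q, cq q, dq q} : Set (ASLq q)),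
        Commute (x ^ l) (y ^ l) := by
  have hl0 : l ≠ 0 := hl.pos.ne'
  have hql : q ^ l = 1 := hq.pow_eq_one
  have hq0 : q ≠ 0 := by
    intro h
    rw [h, zero_pow hl0] at hql
    exact zero_ne_one hql
  -- the defining relations, in the quotient
  have hab : aq q * bq q = q • (bq q * aq q) := by
    have h := RingQuot.mkAlgHom_rel ℂ (SLqRel.ab (q := q))
    simp only [map_mul, map_smul] at h; exact h
  have hac : aq q * cq q = q • (cq q * aq q) := by
    have h := RingQuot.mkAlgHom_rel ℂ (SLqRel.ac (q := q))
    simp only [map_mul, map_smul] at h; exact h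
  have hbd : bq q * dq q = q • (dq q * bq q) := by
    have h := RingQuot.mkAlgHom_rel ℂ (SLqRel.bd (q := q))
    simp only [map_mul, map_smul] at h; exact h
  have hbc : bq q * cq q = cq q * bq q := by
    have h := RingQuot.mkAlgHom_rel ℂ (SLqRel.bc (q := q))
    simp only [map_mul] at h; exact h
  have hcd : cq q * dq q = q • (dq q * cq q) := by
    have h := RingQuot.mkAlgHom_rel ℂ (SLqRel.cd (q := q))
    simp only [map_mul, map_smul] at h; exact h
  have had : aq q * dq q - dq q * aq q = (q - q⁻¹) • (bq q * cq q) := by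
    have h := RingQuot.mkAlgHom_rel ℂ (SLqRel.ad (q := q))
    simp only [map_sub, map_mul, map_smul] at h; exact h
  -- the crucial commutation of a^l and d
  have hda : dq q * aq q = aq q * dq q - (q - q⁻¹) • (bq q * cq q) := by
    rw [← had]; abel
  have hca : cq q * aq q = q⁻¹ • (aq q * cq q) := by
    rw [hac, smul_smul, inv_mul_cancel₀ hq0, one_smul]
  have hba : bq q * aq q = q⁻¹ • (aq q * bq q) := by
    rw [hab, smul_smul, inv_mul_cancel₀ hq0, one_smul]
  have hta : (bq q * cq q) * aq q = ((q⁻¹) ^ 2) • (aq q * (bq q * cq q)) := by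
    calc (bq q * cq q) * aq q = bq q * (cq q * aq q) := by rw [mul_assoc]
      _ = q⁻¹ • ((bq q * aq q) * cq q) := by
          rw [hca, mul_smul_comm, mul_assoc]
      _ = (q⁻¹ * q⁻¹) • (aq q * (bq q * cq q)) := by
          rw [hba, smul_mul_assoc, smul_smul, mul_assoc]
      _ = ((q⁻¹) ^ 2) • (aq q * (bq q * cq q)) := by rw [sq]
  -- the coefficient vanishes
  have hcoef : (∑ i ∈ Finset.range l, ((q⁻¹) ^ 2) ^ i) * (q - q⁻¹) = 0 := by
    by_cases hq1 : q = 1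
    · simp [hq1]
    · have h2 : (q⁻¹) ^ 2 ≠ 1 := by
        intro h
        have hq2 : q ^ 2 = 1 := by
          have := congrArg (· * q ^ 2) h
          simpa [inv_pow, inv_mul_cancel₀ (pow_ne_zero 2 hq0)] using this.symm
        have hdvd : l ∣ 2 := (IsPrimitiveRoot.pow_eq_one_iff_dvd hq 2).mp hq2
        rcases (Nat.dvd_prime Nat.prime_two).mp hdvd with h1 | h1
        · exact hq1 (by simpa [h1] using hql)
        · rw [h1] at hl; exact (Nat.not_odd_iff_even.mpr (by norm_num)) hl
      have hsum : (∑ i ∈ Finset.range l, ((q⁻¹) ^ 2) ^ i) = 0 := by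
        rw [geom_sum_eq h2]
        have : ((q⁻¹) ^ 2) ^ l = 1 := by
          rw [← pow_mul, mul_comm 2 l, pow_mul, inv_pow, hql]; norm_num
        rw [this]; simp
      rw [hsum, zero_mul]
  have Cad : Commute ((aq q) ^ l) ((dq q) ^ l) := by
    obtain ⟨k, rfl⟩ : ∃ k, l = k + 1 := ⟨l - 1, (Nat.succ_pred_eq_of_ne_zero hl0).symm⟩
    have h := da_pow hda hta k
    rw [hcoef, zero_smul, sub_zero] at h
    exact (Commute.symm h).pow_right (k + 1)
  have Cab := comm_of_qcomm hql hab
  have Cac := comm_of_qcomm hql hac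
  have Cbd := comm_of_qcomm hql hbd
  have Ccd := comm_of_qcomm hql hcd
  have Cbc : Commute ((bq q) ^ l) ((cq q) ^ l) := (Commute.pow_pow hbc l l)
  intro x hx y hy
  simp only [Set.mem_insert_iff, Set.mem_singleton_iff] at hx hy
  rcases hx with rfl | rfl | rfl | rfl <;> rcases hy with rfl | rfl | rfl | rfl
  · exact Commute.refl _
  · exact Cab
  · exact Cac
  · exact Cad
  · exact Cab.symm
  · exact Commute.refl _
  · exact Cbc
  · exact Cbd
  · exact Cac.symm
  · exact Cbc.symm
  · exact Commute.refl _
  · exact Ccd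
  · exact Cad.symm
  · exact Cbd.symm
  · exact Ccd.symm
  · exact Commute.refl _
end
end

section
/- Let q be a primitive l-th root of unity with l odd. Then in A(SL_q(2)) one has a^l d^l - b^l c^l = 1, i.e. the l-th powers α, β, γ, δ satisfy the classical determinant relation αδ - βγ = 1. -/
noncomputable section
open scoped TensorProduct

/- ===== auxiliary lemmas ===== -/

lemma sum_odd_range (l : ℕ) : ∑ j ∈ Finset.range l, (2 * j + 1) = l * l := by
  induction l with
  | zero => simp
  | succ n ih => rw [Finset.sum_range_succ, ih]; ring

open Polynomial in
lemma prod_one_add_root_mul_X (q : ℂ) (l : ℕ) (hq : IsPrimitiveRoot q l) (hl : Odd l) :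
    ∏ j ∈ Finset.range l, (1 + C (q ^ (2 * j + 1)) * X) = 1 + X ^ l := by
  have hl0 : 0 < l := hl.pos
  have hq0 : q ≠ 0 := hq.ne_zero hl0.ne'
  have hpow1 : ∀ j : ℕ, (q ^ (2 * j + 1)) ^ l = 1 := by
    intro j
    rw [← pow_mul, mul_comm, pow_mul, hq.pow_eq_one, one_pow]
  have hcne : ∀ j : ℕ, q ^ (2 * j + 1) ≠ 0 := fun j => pow_ne_zero _ hq0
  -- injectivity of j ↦ q^(2j+1) on range l
  have hinj : ∀ i ∈ Finset.range l, ∀ j ∈ Finset.range l,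
      q ^ (2 * i + 1) = q ^ (2 * j + 1) → i = j := by
    have key : ∀ i j : ℕ, i ≤ j → j < l → q ^ (2 * i + 1) = q ^ (2 * j + 1) → i = j := by
      intro i j hij hjl h
      have he : 2 * j + 1 = (2 * i + 1) + 2 * (j - i) := by omega
      have h2 : q ^ (2 * i + 1) * q ^ (2 * (j - i)) = q ^ (2 * i + 1) * 1 := by
        rw [← pow_add, mul_one, ← he, h]
      have h3 : q ^ (2 * (j - i)) = 1 := mul_left_cancel₀ (hcne i) h2
      have h4 : l ∣ 2 * (j - i) := (hq.pow_eq_one_iff_dvd _).1 h3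
      have h5 : l ∣ (j - i) := (Nat.Coprime.dvd_of_dvd_mul_left hl.coprime_two_right h4)
      have h6 : j - i < l := by omega
      have h7 := Nat.eq_zero_of_dvd_of_lt h5 h6
      omega
    intro i hi j hj h
    simp only [Finset.mem_range] at hi hj
    rcases le_total i j with hij | hij
    · exact key i j hij hj h
    · exact (key j i hij hi h.symm).symm
  -- image equals the set of all l-th roots of unity
  have himg : (Finset.range l).image (fun j => q ^ (2 * j + 1)) = nthRootsFinset l (1 : ℂ) := by
    apply Finset.eq_of_subset_of_card_le
    · intro x hx
      simp only [Finset.mem_image, Finset.mem_range] at hx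
      obtain ⟨j, _, rfl⟩ := hx
      exact (mem_nthRootsFinset hl0 (1 : ℂ)).2 (hpow1 j)
    · rw [hq.card_nthRootsFinset, Finset.card_image_of_injOn (fun i hi j hj => hinj i hi j hj),
        Finset.card_range]
  -- ∏ (X - C (q^(2j+1))) = X^l - 1
  have h1 : ∏ j ∈ Finset.range l, (X - C (q ^ (2 * j + 1))) = X ^ l - (1 : ℂ[X]) := by
    rw [X_pow_sub_one_eq_prod hl0 hq, ← himg, Finset.prod_image hinj]
  -- substitute X ↦ -X to get ∏ (X + C (q^(2j+1))) = X^l + 1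
  have h2 : ∏ j ∈ Finset.range l, (X + C (q ^ (2 * j + 1))) = X ^ l + (1 : ℂ[X]) := by
    have := congrArg (aeval (-X : ℂ[X])) h1
    rw [map_prod, map_sub, map_pow, aeval_X, map_one] at this
    have hfac : ∀ j : ℕ, (aeval (-X : ℂ[X])) (X - C (q ^ (2 * j + 1)))
        = (-1 : ℂ[X]) * (X + C (q ^ (2 * j + 1))) := by
      intro j
      rw [map_sub, aeval_X, aeval_C, Polynomial.algebraMap_eq]
      ring
    rw [Finset.prod_congr rfl (fun j _ => hfac j), Finset.prod_mul_distrib,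
      Finset.prod_const, Finset.card_range, hl.neg_one_pow, hl.neg_pow] at this
    have : (-1 : ℂ[X]) * ∏ j ∈ Finset.range l, (X + C (q ^ (2 * j + 1)))
        = (-1 : ℂ[X]) * (X ^ l + 1) := by
      rw [this]; ring
    exact mul_left_cancel₀ (by norm_num) this
  -- product of the roots is 1
  have h3 : ∏ j ∈ Finset.range l, q ^ (2 * j + 1) = 1 := by
    rw [Finset.prod_pow_eq_pow_sum, sum_odd_range, pow_mul, hq.pow_eq_one, one_pow]
  -- inverses are given by the reflection j ↦ l - 1 - j
  have hinv : ∀ j ∈ Finset.range l,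
      (q ^ (2 * j + 1))⁻¹ = q ^ (2 * (l - 1 - j) + 1) := by
    intro j hj
    simp only [Finset.mem_range] at hj
    refine (inv_eq_of_mul_eq_one_right ?_)
    rw [← pow_add]
    have he : 2 * j + 1 + (2 * (l - 1 - j) + 1) = 2 * l := by omega
    rw [he, mul_comm, pow_mul, hq.pow_eq_one, one_pow]
  -- assemble
  have hfac2 : ∀ j ∈ Finset.range l, (1 + C (q ^ (2 * j + 1)) * X : ℂ[X])
      = C (q ^ (2 * j + 1)) * (X + C (q ^ (2 * (l - 1 - j) + 1))) := by
    intro j hj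
    rw [← hinv j hj, mul_add, ← C_mul, mul_inv_cancel₀ (hcne j), C_1]
    ring
  rw [Finset.prod_congr rfl hfac2, Finset.prod_mul_distrib, ← map_prod, h3, C_1, one_mul,
    Finset.prod_range_reflect (fun j => (X + C (q ^ (2 * j + 1)) : ℂ[X])) l, h2]
  ring

/-- For `q` a primitive `l`-th root of unity, `l` odd,
`a^l d^l - b^l c^l = 1` in `A(SL_q(2))`. -/
theorem stmt5 (q : ℂ) (l : ℕ) (hq : IsPrimitiveRoot q l) (hl : Odd l) :
    aq q ^ l * dq q ^ l - bq q ^ l * cq q ^ l = 1 := by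
  set a := aq q with ha
  set b := bq q with hb
  set c := cq q with hc
  set d := dq q with hd
  -- relations in the quotient
  have rbd : b * d = q • (d * b) := by
    have h := RingQuot.mkAlgHom_rel ℂ (SLqRel.bd (q := q))
    simpa [hb, hd, bq, dq, map_mul, map_smul] using h
  have rbc : b * c = c * b := by
    have h := RingQuot.mkAlgHom_rel ℂ (SLqRel.bc (q := q))
    simpa [hb, hc, bq, cq, map_mul] using h
  have rcd : c * d = q • (d * c) := by
    have h := RingQuot.mkAlgHom_rel ℂ (SLqRel.cd (q := q))
    simpa [hc, hd, cq, dq, map_mul, map_smul] using h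
  have rdet : a * d - q • (b * c) = 1 := by
    have h := RingQuot.mkAlgHom_rel ℂ (SLqRel.det (q := q))
    simpa [ha, hb, hc, hd, aq, bq, cq, dq, map_sub, map_mul, map_smul, map_one] using h
  set t : ASLq q := b * c with ht
  have had : a * d = 1 + q • t := by
    rw [sub_eq_iff_eq_add] at rdet
    rw [rdet, add_comm]
  -- t d = q^2 (d t)
  have htd : t * d = (q * q) • (d * t) := by
    calc t * d = b * (c * d) := by rw [ht, mul_assoc]
    _ = q • (b * (d * c)) := by rw [rcd, mul_smul_comm]
    _ = q • ((b * d) * c) := by rw [mul_assoc]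
    _ = q • ((q • (d * b)) * c) := by rw [rbd]
    _ = (q * q) • (d * (b * c)) := by rw [smul_mul_assoc, smul_smul, mul_assoc]
    _ = (q * q) • (d * t) := by rw [ht]
  -- t d^k = q^(2k) (d^k t)
  have htdk : ∀ k : ℕ, t * d ^ k = (q ^ (2 * k)) • (d ^ k * t) := by
    intro k
    induction k with
    | zero => simp
    | succ n ih =>
      calc t * d ^ (n + 1) = (t * d ^ n) * d := by rw [pow_succ, ← mul_assoc]
      _ = (q ^ (2 * n)) • (d ^ n * (t * d)) := by rw [ih, smul_mul_assoc, mul_assoc]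
      _ = (q ^ (2 * n)) • (d ^ n * ((q * q) • (d * t))) := by rw [htd]
      _ = ((q ^ (2 * n)) * (q * q)) • (d ^ n * (d * t)) := by rw [mul_smul_comm, smul_smul]
      _ = (q ^ (2 * (n + 1))) • (d ^ (n + 1) * t) := by
          rw [← mul_assoc (d ^ n) d t, ← pow_succ]
          congr 1
          ring
  -- main induction: a^k d^k = aeval t (∏_{j<k} (1 + q^(2j+1) X))
  have main : ∀ k : ℕ, a ^ k * d ^ k =
      Polynomial.aeval t (∏ j ∈ Finset.range k,
        (1 + Polynomial.C (q ^ (2 * j + 1)) * Polynomial.X)) := by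
    intro k
    induction k with
    | zero => simp
    | succ n ih =>
      have e1 : a ^ (n + 1) * d ^ (n + 1) = a ^ n * ((a * d) * d ^ n) := by
        rw [pow_succ, pow_succ', mul_assoc, mul_assoc]
      have e2 : a ^ n * ((a * d) * d ^ n)
          = a ^ n * d ^ n + (q ^ (2 * n + 1)) • ((a ^ n * d ^ n) * t) := by
        calc a ^ n * ((a * d) * d ^ n) = a ^ n * ((1 + q • t) * d ^ n) := by rw [had]
        _ = a ^ n * (d ^ n + q • (t * d ^ n)) := by rw [add_mul, one_mul, smul_mul_assoc]
        _ = a ^ n * (d ^ n + (q * q ^ (2 * n)) • (d ^ n * t)) := by rw [htdk n, smul_smul]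
        _ = a ^ n * d ^ n + (q * q ^ (2 * n)) • (a ^ n * (d ^ n * t)) := by
            rw [mul_add, mul_smul_comm]
        _ = a ^ n * d ^ n + (q ^ (2 * n + 1)) • ((a ^ n * d ^ n) * t) := by
            rw [← mul_assoc (a ^ n) (d ^ n) t, ← pow_succ']
      have e3 : Polynomial.aeval t ((1 : Polynomial ℂ) + Polynomial.C (q ^ (2 * n + 1))
          * Polynomial.X) = 1 + (q ^ (2 * n + 1)) • t := by
        rw [map_add, map_one, map_mul, Polynomial.aeval_C, Polynomial.aeval_X,
          Algebra.smul_def]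
      rw [e1, e2, Finset.prod_range_succ, map_mul, ← ih, e3, mul_add, mul_one,
        mul_smul_comm]
  -- conclude
  have hfinal := main l
  rw [prod_one_add_root_mul_X q l hq hl, map_add, map_one, map_pow,
    Polynomial.aeval_X] at hfinal
  have htl : t ^ l = b ^ l * c ^ l := (Commute.mul_pow (by exact rbc) l)
  rw [hfinal, htl]
  exact add_sub_cancel_right 1 _
end
end

section
/- Let q be a primitive l-th root of unity with l odd, and let A(SL(2)) ⊂ A(SL_q(2)) be the central subalgebra generated by α=a^l, β=b^l, γ=c^l, δ=d^l. Then A(SL_q(2)) is generated as a left A(SL(2))-module by the 2l^3 elements a^{r_a} b^{r_b} c^{r_c} and b^{r_b} c^{r_c} d^{r_d} with 0 ≤ r_a, r_b, r_c, r_d ≤ l-1. -/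
noncomputable section
open scoped TensorProduct

set_option linter.unusedSectionVars false

namespace SLqAux
variable (q : ℂ)

lemma hab : aq q * bq q = q • (bq q * aq q) := by
  simpa [aq, bq, map_mul] using RingQuot.mkAlgHom_rel ℂ (SLqRel.ab (q := q))
lemma hac : aq q * cq q = q • (cq q * aq q) := by
  simpa [aq, cq, map_mul] using RingQuot.mkAlgHom_rel ℂ (SLqRel.ac (q := q))
lemma hbd : bq q * dq q = q • (dq q * bq q) := by
  simpa [bq, dq, map_mul] using RingQuot.mkAlgHom_rel ℂ (SLqRel.bd (q := q))
lemma hbc : bq q * cq q = cq q * bq q := by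
  simpa [bq, cq, map_mul] using RingQuot.mkAlgHom_rel ℂ (SLqRel.bc (q := q))
lemma hcd : cq q * dq q = q • (dq q * cq q) := by
  simpa [cq, dq, map_mul] using RingQuot.mkAlgHom_rel ℂ (SLqRel.cd (q := q))
lemma had : aq q * dq q = 1 + q • (bq q * cq q) := by
  have h := RingQuot.mkAlgHom_rel ℂ (SLqRel.det (q := q))
  simp only [map_sub, map_mul, map_smul, map_one] at h
  have := sub_eq_iff_eq_add.mp h
  simpa [aq, bq, cq, dq, add_comm] using this
lemma hda : dq q * aq q = 1 + q⁻¹ • (bq q * cq q) := by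
  have h := RingQuot.mkAlgHom_rel ℂ (SLqRel.ad (q := q))
  simp only [map_sub, map_mul, map_smul] at h
  have h' : aq q * dq q - dq q * aq q = (q - q⁻¹) • (bq q * cq q) := by
    simpa [aq, bq, cq, dq] using h
  have h2 := had q
  have : dq q * aq q = aq q * dq q - (q - q⁻¹) • (bq q * cq q) := by
    rw [← h', sub_sub_cancel]
  rw [this, h2]
  module

-- generic commuting-with-scalar lemmas
lemma pow_swap {A : Type*} [Ring A] [Algebra ℂ A] {x y : A} {t : ℂ}
    (h : x * y = t • (y * x)) (n : ℕ) : x * y ^ n = t ^ n • (y ^ n * x) := by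
  induction n with
  | zero => simp
  | succ n ih =>
    rw [pow_succ, ← mul_assoc, ih, smul_mul_assoc, mul_assoc, h, mul_smul_comm,
      smul_smul, ← mul_assoc, ← pow_succ, ← pow_succ]

lemma eq_inv_smul {A : Type*} [Ring A] [Module ℂ A] {t : ℂ} (ht : t ≠ 0) {X Y : A}
    (h : X = t • Y) : Y = t⁻¹ • X := by
  rw [h, smul_smul, inv_mul_cancel₀ ht, one_smul]

/-- contextual swap: move `x` leftward past `w`. -/
lemma swap_ctx {A : Type*} [Ring A] [Algebra ℂ A] {x w : A} {t : ℂ} (ht : t ≠ 0)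
    (h : x * w = t • (w * x)) (z : A) : w * (x * z) = t⁻¹ • (x * (w * z)) := by
  have h1 : w * x = t⁻¹ • (x * w) := eq_inv_smul ht h
  rw [← mul_assoc, h1, smul_mul_assoc, mul_assoc]

lemma swap_ctx' {A : Type*} [Ring A] [Algebra ℂ A] {x w : A}
    (h : x * w = w * x) (z : A) : w * (x * z) = x * (w * z) := by
  rw [← mul_assoc, ← h, mul_assoc]

lemma swap_ctx2 {A : Type*} [Ring A] [Algebra ℂ A] {x w : A} {t : ℂ}
    (h : x * w = t • (w * x)) (z : A) : x * (w * z) = t • (w * (x * z)) := by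
  rw [← mul_assoc, h, smul_mul_assoc, mul_assoc]

lemma pow_swap_left {A : Type*} [Ring A] [Algebra ℂ A] {x y : A} {t : ℂ}
    (h : x * y = t • (y * x)) (n : ℕ) : x ^ n * y = t ^ n • (y * x ^ n) := by
  induction n with
  | zero => simp
  | succ n ih =>
    rw [pow_succ, mul_assoc, h, mul_smul_comm, ← mul_assoc, ih, smul_mul_assoc,
      smul_smul, mul_assoc, ← pow_succ]
    rw [← pow_succ']


section Main
variable (q : ℂ) (l : ℕ)

abbrev Rsub : Subalgebra ℂ (ASLq q) :=
  Algebra.adjoin ℂ ({aq q ^ l, bq q ^ l, cq q ^ l, dq q ^ l} : Set (ASLq q))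

abbrev Msub : Submodule (Rsub q l) (ASLq q) :=
  Submodule.span (Rsub q l)
    ({x : ASLq q | ∃ ra rb rc : ℕ, ra ≤ l - 1 ∧ rb ≤ l - 1 ∧ rc ≤ l - 1 ∧
        x = aq q ^ ra * bq q ^ rb * cq q ^ rc} ∪
     {x : ASLq q | ∃ rb rc rd : ℕ, rb ≤ l - 1 ∧ rc ≤ l - 1 ∧ rd ≤ l - 1 ∧
        x = bq q ^ rb * cq q ^ rc * dq q ^ rd})

lemma pull {p x : ASLq q} (hp : p ∈ Rsub q l) (hx : x ∈ Msub q l) :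
    p * x ∈ Msub q l := by
  have : p * x = (⟨p, hp⟩ : Rsub q l) • x := rfl
  rw [this]
  exact Submodule.smul_mem _ _ hx

lemma zsmul_memM (z : ℂ) {x : ASLq q} (hx : x ∈ Msub q l) : z • x ∈ Msub q l := by
  have : z • x = (⟨algebraMap ℂ (ASLq q) z, Subalgebra.algebraMap_mem _ z⟩ : Rsub q l) • x := by
    show z • x = algebraMap ℂ (ASLq q) z * x
    rw [Algebra.smul_def]
  rw [this]
  exact Submodule.smul_mem _ _ hx

lemma haR : aq q ^ l ∈ Rsub q l := Algebra.subset_adjoin (by simp)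
lemma hbR : bq q ^ l ∈ Rsub q l := Algebra.subset_adjoin (by simp)
lemma hcR : cq q ^ l ∈ Rsub q l := Algebra.subset_adjoin (by simp)
lemma hdR : dq q ^ l ∈ Rsub q l := Algebra.subset_adjoin (by simp)

lemma base1 {i j k : ℕ} (hi : i ≤ l - 1) (hj : j ≤ l - 1) (hk : k ≤ l - 1) :
    aq q ^ i * bq q ^ j * cq q ^ k ∈ Msub q l :=
  Submodule.subset_span (Or.inl ⟨i, j, k, hi, hj, hk, rfl⟩)

lemma base2 {j k m : ℕ} (hj : j ≤ l - 1) (hk : k ≤ l - 1) (hm : m ≤ l - 1) :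
    bq q ^ j * cq q ^ k * dq q ^ m ∈ Msub q l :=
  Submodule.subset_span (Or.inr ⟨j, k, m, hj, hk, hm, rfl⟩)

variable {q l}

lemma Cbc (q : ℂ) : Commute (bq q) (cq q) := hbc q

lemma pow_split (x : ASLq q) (n : ℕ) : x ^ n = (x ^ l) ^ (n / l) * x ^ (n % l) := by
  rw [← pow_mul, ← pow_add, Nat.div_add_mod]

section Root
variable (hq : IsPrimitiveRoot q l) (hl : Odd l)
include hq hl

lemma hl0 : l ≠ 0 := by rintro rfl; simp [Nat.odd_iff] at hl

lemma hql : q ^ l = 1 := hq.pow_eq_one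

lemma hq0 : q ≠ 0 := by
  intro h
  have := hql hq hl
  rw [h, zero_pow (hl0 hq hl)] at this
  exact zero_ne_one this

lemma qn0 (n : ℕ) : q ^ n ≠ 0 := pow_ne_zero _ (hq0 hq hl)

lemma mod_le (n : ℕ) : n % l ≤ l - 1 :=
  Nat.le_sub_one_of_lt (Nat.mod_lt _ (Nat.pos_of_ne_zero (hl0 hq hl)))

lemma Ca_bl : Commute (aq q) (bq q ^ l) := by
  show _ = _
  rw [pow_swap (hab q), hql hq hl, one_smul]

lemma Ca_cl : Commute (aq q) (cq q ^ l) := by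
  show _ = _
  rw [pow_swap (hac q), hql hq hl, one_smul]

lemma Cb_dl : Commute (bq q) (dq q ^ l) := by
  show _ = _
  rw [pow_swap (hbd q), hql hq hl, one_smul]

lemma Cc_dl : Commute (cq q) (dq q ^ l) := by
  show _ = _
  rw [pow_swap (hcd q), hql hq hl, one_smul]

lemma Cb_cl : Commute (bq q) (cq q ^ l) := (Cbc q).pow_right l

lemma step_a (i j k : ℕ) (hj : j ≤ l - 1) (hk : k ≤ l - 1) :
    aq q ^ i * bq q ^ j * cq q ^ k ∈ Msub q l := by
  have e : aq q ^ i * bq q ^ j * cq q ^ k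
      = (aq q ^ l) ^ (i / l) * (aq q ^ (i % l) * bq q ^ j * cq q ^ k) := by
    conv_lhs => rw [pow_split (l := l) (aq q) i]
    rw [mul_assoc ((aq q ^ l) ^ (i / l)), mul_assoc ((aq q ^ l) ^ (i / l))]
  rw [e]
  exact pull q l (pow_mem (haR q l) _) (base1 q l (mod_le hq hl i) hj hk)

lemma step_b (i j k : ℕ) (hk : k ≤ l - 1) :
    aq q ^ i * bq q ^ j * cq q ^ k ∈ Msub q l := by
  have hcomm : Commute (aq q ^ i) ((bq q ^ l) ^ (j / l)) := (Ca_bl hq hl).pow_pow _ _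
  have e : aq q ^ i * bq q ^ j * cq q ^ k
      = (bq q ^ l) ^ (j / l) * (aq q ^ i * bq q ^ (j % l) * cq q ^ k) := by
    conv_lhs => rw [pow_split (l := l) (bq q) j]
    rw [← mul_assoc (aq q ^ i), hcomm.eq, mul_assoc ((bq q ^ l) ^ (j / l)),
      mul_assoc ((bq q ^ l) ^ (j / l))]
  rw [e]
  exact pull q l (pow_mem (hbR q l) _) (step_a hq hl i _ k (mod_le hq hl j) hk)

lemma mem1 (i j k : ℕ) : aq q ^ i * bq q ^ j * cq q ^ k ∈ Msub q l := by
  have hcomm : Commute (aq q ^ i * bq q ^ j) ((cq q ^ l) ^ (k / l)) :=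
    ((Ca_cl hq hl).pow_pow i (k / l)).mul_left ((Cb_cl hq hl).pow_pow j (k / l))
  have e : aq q ^ i * bq q ^ j * cq q ^ k
      = (cq q ^ l) ^ (k / l) * (aq q ^ i * bq q ^ j * cq q ^ (k % l)) := by
    conv_lhs => rw [pow_split (l := l) (cq q) k]
    rw [← mul_assoc, hcomm.eq, mul_assoc]
  rw [e]
  exact pull q l (pow_mem (hcR q l) _) (step_b hq hl i j _ (mod_le hq hl k))

lemma step_b2 (j k m : ℕ) (hk : k ≤ l - 1) (hm : m ≤ l - 1) :
    bq q ^ j * cq q ^ k * dq q ^ m ∈ Msub q l := by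
  have e : bq q ^ j * cq q ^ k * dq q ^ m
      = (bq q ^ l) ^ (j / l) * (bq q ^ (j % l) * cq q ^ k * dq q ^ m) := by
    conv_lhs => rw [pow_split (l := l) (bq q) j]
    rw [mul_assoc ((bq q ^ l) ^ (j / l)), mul_assoc ((bq q ^ l) ^ (j / l))]
  rw [e]
  exact pull q l (pow_mem (hbR q l) _) (base2 q l (mod_le hq hl j) hk hm)

lemma step_c2 (j k m : ℕ) (hm : m ≤ l - 1) :
    bq q ^ j * cq q ^ k * dq q ^ m ∈ Msub q l := by
  have hcomm : Commute (bq q ^ j) ((cq q ^ l) ^ (k / l)) := (Cb_cl hq hl).pow_pow _ _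
  have e : bq q ^ j * cq q ^ k * dq q ^ m
      = (cq q ^ l) ^ (k / l) * (bq q ^ j * cq q ^ (k % l) * dq q ^ m) := by
    conv_lhs => rw [pow_split (l := l) (cq q) k]
    rw [← mul_assoc (bq q ^ j), hcomm.eq, mul_assoc ((cq q ^ l) ^ (k / l)),
      mul_assoc ((cq q ^ l) ^ (k / l))]
  rw [e]
  exact pull q l (pow_mem (hcR q l) _) (step_b2 hq hl j _ m (mod_le hq hl k) hm)

lemma mem2 (j k m : ℕ) : bq q ^ j * cq q ^ k * dq q ^ m ∈ Msub q l := by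
  have hcomm : Commute (bq q ^ j * cq q ^ k) ((dq q ^ l) ^ (m / l)) :=
    ((Cb_dl hq hl).pow_pow j (m / l)).mul_left ((Cc_dl hq hl).pow_pow k (m / l))
  have e : bq q ^ j * cq q ^ k * dq q ^ m
      = (dq q ^ l) ^ (m / l) * (bq q ^ j * cq q ^ k * dq q ^ (m % l)) := by
    conv_lhs => rw [pow_split (l := l) (dq q) m]
    rw [← mul_assoc, hcomm.eq, mul_assoc]
  rw [e]
  exact pull q l (pow_mem (hdR q l) _) (step_c2 hq hl j k _ (mod_le hq hl m))

omit hq hl in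
lemma mem_of_smul_eq {t : ℂ} (ht : t ≠ 0) {x y : ASLq q} (h : x = t • y)
    (hx : x ∈ Msub q l) : y ∈ Msub q l := by
  rw [eq_inv_smul (X := x) (Y := y) ht h]
  exact zsmul_memM q l _ hx

lemma mulA1 (i j k : ℕ) : (aq q ^ i * bq q ^ j * cq q ^ k) * aq q ∈ Msub q l := by
  have e : aq q ^ (i+1) * bq q ^ j * cq q ^ k
      = (q ^ j * q ^ k) • (aq q ^ i * bq q ^ j * cq q ^ k * aq q) := by
    calc aq q ^ (i+1) * bq q ^ j * cq q ^ k
        = aq q ^ i * (aq q * bq q ^ j) * cq q ^ k := by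
          rw [pow_succ, mul_assoc (aq q ^ i)]
      _ = aq q ^ i * (q ^ j • (bq q ^ j * aq q)) * cq q ^ k := by
          rw [pow_swap (hab q) j]
      _ = q ^ j • (aq q ^ i * (bq q ^ j * (aq q * cq q ^ k))) := by
          rw [mul_smul_comm, smul_mul_assoc, mul_assoc (aq q ^ i), mul_assoc (bq q ^ j)]
      _ = q ^ j • (aq q ^ i * (bq q ^ j * (q ^ k • (cq q ^ k * aq q)))) := by
          rw [pow_swap (hac q) k]
      _ = (q ^ j * q ^ k) • (aq q ^ i * (bq q ^ j * (cq q ^ k * aq q))) := by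
          rw [mul_smul_comm, mul_smul_comm, smul_smul]
      _ = (q ^ j * q ^ k) • (aq q ^ i * bq q ^ j * cq q ^ k * aq q) := by
          rw [mul_assoc (aq q ^ i * bq q ^ j), mul_assoc (aq q ^ i)]
  exact mem_of_smul_eq (mul_ne_zero (qn0 hq hl j) (qn0 hq hl k)) e (mem1 hq hl (i+1) j k)

lemma mulB1 (i j k : ℕ) : (aq q ^ i * bq q ^ j * cq q ^ k) * bq q ∈ Msub q l := by
  have e : (aq q ^ i * bq q ^ j * cq q ^ k) * bq q = aq q ^ i * bq q ^ (j+1) * cq q ^ k := by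
    calc (aq q ^ i * bq q ^ j * cq q ^ k) * bq q
        = aq q ^ i * (bq q ^ j * (cq q ^ k * bq q)) := by
          rw [mul_assoc (aq q ^ i * bq q ^ j), mul_assoc (aq q ^ i)]
      _ = aq q ^ i * (bq q ^ j * (bq q * cq q ^ k)) := by
          rw [((Cbc q).symm.pow_left k).eq]
      _ = aq q ^ i * bq q ^ (j+1) * cq q ^ k := by
          rw [← mul_assoc (bq q ^ j), ← pow_succ, ← mul_assoc]
  rw [e]
  exact mem1 hq hl i (j+1) k

lemma mulC1 (i j k : ℕ) : (aq q ^ i * bq q ^ j * cq q ^ k) * cq q ∈ Msub q l := by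
  have e : (aq q ^ i * bq q ^ j * cq q ^ k) * cq q = aq q ^ i * bq q ^ j * cq q ^ (k+1) := by
    rw [mul_assoc (aq q ^ i * bq q ^ j), ← pow_succ]
  rw [e]
  exact mem1 hq hl i j (k+1)

omit hq hl in
lemma hbcY (j k : ℕ) :
    (bq q * cq q) * (bq q ^ j * cq q ^ k) = bq q ^ (j+1) * cq q ^ (k+1) := by
  rw [mul_assoc (bq q), swap_ctx' ((Cbc q).pow_left j).eq (cq q ^ k), ← pow_succ',
    ← mul_assoc (bq q), ← pow_succ']

lemma mulD1 (i j k : ℕ) : (aq q ^ i * bq q ^ j * cq q ^ k) * dq q ∈ Msub q l := by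
  cases i with
  | zero =>
    have e : (aq q ^ 0 * bq q ^ j * cq q ^ k) * dq q = bq q ^ j * cq q ^ k * dq q ^ 1 := by
      rw [pow_zero, one_mul, pow_one]
    rw [e]
    exact mem2 hq hl j k 1
  | succ i =>
    have e : aq q ^ (i+1) * bq q ^ j * cq q ^ k * dq q
        = (q ^ k * q ^ j) • (aq q ^ i * bq q ^ j * cq q ^ k
            + q • (aq q ^ i * bq q ^ (j+1) * cq q ^ (k+1))) := by
      calc aq q ^ (i+1) * bq q ^ j * cq q ^ k * dq q
          = aq q ^ (i+1) * (bq q ^ j * (cq q ^ k * dq q)) := by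
            rw [mul_assoc (aq q ^ (i+1) * bq q ^ j), mul_assoc (aq q ^ (i+1))]
        _ = q ^ k • (aq q ^ (i+1) * (bq q ^ j * (dq q * cq q ^ k))) := by
            rw [pow_swap_left (hcd q) k, mul_smul_comm, mul_smul_comm]
        _ = (q ^ k * q ^ j) • (aq q ^ (i+1) * (dq q * (bq q ^ j * cq q ^ k))) := by
            rw [swap_ctx2 (pow_swap_left (hbd q) j) (cq q ^ k), mul_smul_comm, smul_smul]
        _ = (q ^ k * q ^ j) • (aq q ^ i * ((aq q * dq q) * (bq q ^ j * cq q ^ k))) := by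
            rw [pow_succ, mul_assoc (aq q ^ i), ← mul_assoc (aq q) (dq q)]
        _ = (q ^ k * q ^ j) • (aq q ^ i * (bq q ^ j * cq q ^ k)
              + q • (aq q ^ i * ((bq q * cq q) * (bq q ^ j * cq q ^ k)))) := by
            rw [had q, add_mul, one_mul, smul_mul_assoc, mul_add, mul_smul_comm]
        _ = (q ^ k * q ^ j) • (aq q ^ i * bq q ^ j * cq q ^ k
              + q • (aq q ^ i * bq q ^ (j+1) * cq q ^ (k+1))) := by
            rw [hbcY, ← mul_assoc (aq q ^ i) (bq q ^ j), ← mul_assoc (aq q ^ i) (bq q ^ (j+1))]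
    rw [e]
    exact zsmul_memM q l _ (add_mem (mem1 hq hl i j k)
      (zsmul_memM q l _ (mem1 hq hl i (j+1) (k+1))))

lemma mulB2 (j k m : ℕ) : (bq q ^ j * cq q ^ k * dq q ^ m) * bq q ∈ Msub q l := by
  have e : bq q ^ (j+1) * cq q ^ k * dq q ^ m
      = q ^ m • (bq q ^ j * cq q ^ k * dq q ^ m * bq q) := by
    calc bq q ^ (j+1) * cq q ^ k * dq q ^ m
        = bq q ^ j * ((bq q * cq q ^ k) * dq q ^ m) := by
          rw [pow_succ, mul_assoc (bq q ^ j) (bq q), mul_assoc (bq q ^ j)]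
      _ = bq q ^ j * (cq q ^ k * (bq q * dq q ^ m)) := by
          rw [((Cbc q).pow_right k).eq, mul_assoc (cq q ^ k)]
      _ = q ^ m • (bq q ^ j * (cq q ^ k * (dq q ^ m * bq q))) := by
          rw [pow_swap (hbd q) m, mul_smul_comm, mul_smul_comm]
      _ = q ^ m • (bq q ^ j * cq q ^ k * dq q ^ m * bq q) := by
          rw [mul_assoc (bq q ^ j * cq q ^ k), mul_assoc (bq q ^ j)]
  exact mem_of_smul_eq (qn0 hq hl m) e (mem2 hq hl (j+1) k m)

lemma mulC2 (j k m : ℕ) : (bq q ^ j * cq q ^ k * dq q ^ m) * cq q ∈ Msub q l := by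
  have e : bq q ^ j * cq q ^ (k+1) * dq q ^ m
      = q ^ m • (bq q ^ j * cq q ^ k * dq q ^ m * cq q) := by
    calc bq q ^ j * cq q ^ (k+1) * dq q ^ m
        = bq q ^ j * (cq q ^ k * (cq q * dq q ^ m)) := by
          rw [pow_succ, mul_assoc (bq q ^ j), mul_assoc (cq q ^ k)]
      _ = q ^ m • (bq q ^ j * (cq q ^ k * (dq q ^ m * cq q))) := by
          rw [pow_swap (hcd q) m, mul_smul_comm, mul_smul_comm]
      _ = q ^ m • (bq q ^ j * cq q ^ k * dq q ^ m * cq q) := by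
          rw [mul_assoc (bq q ^ j * cq q ^ k), mul_assoc (bq q ^ j)]
  exact mem_of_smul_eq (qn0 hq hl m) e (mem2 hq hl j (k+1) m)

lemma mulD2 (j k m : ℕ) : (bq q ^ j * cq q ^ k * dq q ^ m) * dq q ∈ Msub q l := by
  have e : (bq q ^ j * cq q ^ k * dq q ^ m) * dq q = bq q ^ j * cq q ^ k * dq q ^ (m+1) := by
    rw [mul_assoc (bq q ^ j * cq q ^ k), ← pow_succ]
  rw [e]
  exact mem2 hq hl j k (m+1)

lemma mulA2 (j k m : ℕ) : (bq q ^ j * cq q ^ k * dq q ^ m) * aq q ∈ Msub q l := by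
  cases m with
  | zero =>
    have e : aq q ^ 1 * bq q ^ j * cq q ^ k
        = (q ^ j * q ^ k) • (bq q ^ j * cq q ^ k * dq q ^ 0 * aq q) := by
      calc aq q ^ 1 * bq q ^ j * cq q ^ k
          = (aq q * bq q ^ j) * cq q ^ k := by rw [pow_one]
        _ = q ^ j • (bq q ^ j * (aq q * cq q ^ k)) := by
            rw [pow_swap (hab q) j, smul_mul_assoc, mul_assoc]
        _ = (q ^ j * q ^ k) • (bq q ^ j * (cq q ^ k * aq q)) := by
            rw [pow_swap (hac q) k, mul_smul_comm, smul_smul]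
        _ = (q ^ j * q ^ k) • (bq q ^ j * cq q ^ k * dq q ^ 0 * aq q) := by
            rw [pow_zero, mul_one, mul_assoc (bq q ^ j)]
    exact mem_of_smul_eq (mul_ne_zero (qn0 hq hl j) (qn0 hq hl k)) e (mem1 hq hl 1 j k)
  | succ m =>
    have e : bq q ^ j * cq q ^ k * dq q ^ (m+1) * aq q
        = bq q ^ j * cq q ^ k * dq q ^ m
          + (q⁻¹ * ((q ^ m)⁻¹ * (q ^ m)⁻¹)) • (bq q ^ (j+1) * cq q ^ (k+1) * dq q ^ m) := by
      have hda' : dq q ^ (m+1) * aq q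
          = dq q ^ m + q⁻¹ • (dq q ^ m * (bq q * cq q)) := by
        calc dq q ^ (m+1) * aq q
            = dq q ^ m * (dq q * aq q) := by rw [pow_succ, mul_assoc]
          _ = dq q ^ m * (1 + q⁻¹ • (bq q * cq q)) := by rw [hda q]
          _ = dq q ^ m + q⁻¹ • (dq q ^ m * (bq q * cq q)) := by
              rw [mul_add, mul_one, mul_smul_comm]
      have hdbc : dq q ^ m * (bq q * cq q)
          = ((q ^ m)⁻¹ * (q ^ m)⁻¹) • (bq q * cq q * dq q ^ m) := by
        calc dq q ^ m * (bq q * cq q)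
            = (q ^ m)⁻¹ • (bq q * (dq q ^ m * cq q)) := by
              rw [swap_ctx (qn0 hq hl m) (pow_swap (hbd q) m) (cq q)]
          _ = ((q ^ m)⁻¹ * (q ^ m)⁻¹) • (bq q * (cq q * dq q ^ m)) := by
              rw [eq_inv_smul (X := cq q * dq q ^ m) (Y := dq q ^ m * cq q) (qn0 hq hl m) (pow_swap (hcd q) m), mul_smul_comm, smul_smul]
          _ = ((q ^ m)⁻¹ * (q ^ m)⁻¹) • (bq q * cq q * dq q ^ m) := by
              rw [mul_assoc]
      calc bq q ^ j * cq q ^ k * dq q ^ (m+1) * aq q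
          = bq q ^ j * cq q ^ k * (dq q ^ (m+1) * aq q) := by
            rw [mul_assoc (bq q ^ j * cq q ^ k)]
        _ = bq q ^ j * cq q ^ k * dq q ^ m
            + (q⁻¹ * ((q ^ m)⁻¹ * (q ^ m)⁻¹)) •
              ((bq q ^ j * cq q ^ k) * ((bq q * cq q) * dq q ^ m)) := by
            rw [hda', hdbc, mul_add, mul_smul_comm, mul_smul_comm, smul_smul]
        _ = bq q ^ j * cq q ^ k * dq q ^ m
            + (q⁻¹ * ((q ^ m)⁻¹ * (q ^ m)⁻¹)) • (bq q ^ (j+1) * cq q ^ (k+1) * dq q ^ m) := by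
            rw [← mul_assoc (bq q ^ j * cq q ^ k) (bq q * cq q) (dq q ^ m),
              mul_assoc (bq q ^ j) (cq q ^ k) (bq q * cq q),
              swap_ctx' ((Cbc q).pow_right k).eq (cq q), ← pow_succ (cq q) k,
              ← mul_assoc (bq q ^ j) (bq q) (cq q ^ (k+1)), ← pow_succ (bq q) j]
    rw [e]
    exact add_mem (mem2 hq hl j k m) (zsmul_memM q l _ (mem2 hq hl (j+1) (k+1) m))

lemma stepg (g : ASLq q)
    (h1 : ∀ i j k : ℕ, (aq q ^ i * bq q ^ j * cq q ^ k) * g ∈ Msub q l)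
    (h2 : ∀ j k m : ℕ, (bq q ^ j * cq q ^ k * dq q ^ m) * g ∈ Msub q l) :
    ∀ x ∈ Msub q l, x * g ∈ Msub q l := by
  intro x hx
  induction hx using Submodule.span_induction with
  | mem s hs =>
    rcases hs with ⟨i, j, k, _, _, _, rfl⟩ | ⟨j, k, m, _, _, _, rfl⟩
    · exact h1 i j k
    · exact h2 j k m
  | zero => simpa using zero_mem (Msub q l)
  | add x y _ _ hx hy => rw [add_mul]; exact add_mem hx hy
  | smul r x _ hx =>
    have e : (r • x) * g = r • (x * g) := mul_assoc (r : ASLq q) x g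
    rw [e]
    exact Submodule.smul_mem _ _ hx

omit hq hl in
lemma oneM : (1 : ASLq q) ∈ Msub q l := by
  have h := base1 q l (i := 0) (j := 0) (k := 0) (Nat.zero_le _) (Nat.zero_le _) (Nat.zero_le _)
  simpa using h

theorem main : Msub q l = ⊤ := by
  rw [eq_top_iff]
  rintro x -
  obtain ⟨y, rfl⟩ := RingQuot.mkAlgHom_surjective ℂ (SLqRel q) x
  have key : ∀ y : FreeSL, ∀ m ∈ Msub q l,
      m * RingQuot.mkAlgHom ℂ (SLqRel q) y ∈ Msub q l := by
    intro y
    induction y using FreeAlgebra.induction with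
    | grade0 r =>
      intro m hm
      rw [AlgHom.commutes]
      have e : m * algebraMap ℂ (ASLq q) r = r • m := by
        rw [← Algebra.commutes, ← Algebra.smul_def]
      rw [e]
      exact zsmul_memM q l r hm
    | grade1 x =>
      fin_cases x
      · exact fun m hm => stepg hq hl (aq q)
          (fun i j k => mulA1 hq hl i j k) (fun j k m' => mulA2 hq hl j k m') m hm
      · exact fun m hm => stepg hq hl (bq q)
          (fun i j k => mulB1 hq hl i j k) (fun j k m' => mulB2 hq hl j k m') m hm
      · exact fun m hm => stepg hq hl (cq q)
          (fun i j k => mulC1 hq hl i j k) (fun j k m' => mulC2 hq hl j k m') m hm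
      · exact fun m hm => stepg hq hl (dq q)
          (fun i j k => mulD1 hq hl i j k) (fun j k m' => mulD2 hq hl j k m') m hm
    | mul x y hx hy =>
      intro m hm
      rw [map_mul, ← mul_assoc]
      exact hy _ (hx _ hm)
    | add x y hx hy =>
      intro m hm
      rw [map_add, mul_add]
      exact add_mem (hx _ hm) (hy _ hm)
  have h := key y 1 (oneM (q := q) (l := l))
  simpa using h

end Root
end Main
end SLqAux


/-- For `q` a primitive `l`-th root of unity, `l` odd, `A(SL_q(2))` is generated
as a left module over the central subalgebra `A(SL(2))` (generated by
`a^l, b^l, c^l, d^l`) by the `2l^3` monomials `a^{ra} b^{rb} c^{rc}` and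
`b^{rb} c^{rc} d^{rd}` with exponents between `0` and `l-1`. -/
theorem stmt10 (q : ℂ) (l : ℕ) (hq : IsPrimitiveRoot q l) (hl : Odd l) :
    Submodule.span
      (Algebra.adjoin ℂ ({aq q ^ l, bq q ^ l, cq q ^ l, dq q ^ l} : Set (ASLq q)))
      ({x : ASLq q | ∃ ra rb rc : ℕ, ra ≤ l - 1 ∧ rb ≤ l - 1 ∧ rc ≤ l - 1 ∧
          x = aq q ^ ra * bq q ^ rb * cq q ^ rc} ∪
       {x : ASLq q | ∃ rb rc rd : ℕ, rb ≤ l - 1 ∧ rc ≤ l - 1 ∧ rd ≤ l - 1 ∧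
          x = bq q ^ rb * cq q ^ rc * dq q ^ rd}) = ⊤ := by
  exact SLqAux.main hq hl
end
end
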